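/- Let G be a finite group whose Frattini subgroup is trivial. Then the Fitting subgroup F(G) is a direct product of abelian minimal normal subgroups of G; in particular, F(G) is abelian. -/

import Mathlib

/-- The Fitting subgroup of a group: the join of all normal nilpotent subgroups. -/
def fittingSubgroup (G : Type*) [Group G] : Subgroup G :=
  ⨆ H ∈ {H : Subgroup G | H.Normal ∧ Group.IsNilpotent H}, H

/-- A minimal normal subgroup. -/
def IsMinimalNormal {G : Type*} [Group G] (H : Subgroup G) : Prop :=
  H.Normal ∧ H ≠ ⊥ ∧ ∀ K : Subgroup G, K.Normal → K ≤ H → K = ⊥ ∨ K = H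

open Subgroup Pointwise
open scoped commutatorElement
open scoped Classical

section AuxLemmas

variable {G : Type*} [Group G]

/-- Decompose an element of `D ⊔ M` when `D` is normal. -/
lemma aux_mem_sup_of_normal {D M : Subgroup G} (hD : D.Normal) {x : G} (hx : x ∈ D ⊔ M) :
    ∃ d ∈ D, ∃ m ∈ M, d * m = x := by
  haveI := hD
  have h : x ∈ ((D : Set G) * (M : Set G)) := by
    rw [← Subgroup.normal_mul]
    exact hx
  rw [Set.mem_mul] at h
  obtain ⟨d, hd, m, hm, hdm⟩ := h
  exact ⟨d, hd, m, hm, hdm⟩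

/-- Dedekind-style identity. -/
lemma aux_dedekind {D K M : Subgroup G} (hD : D.Normal) (hDK : D ≤ K) (h : D ⊔ M = ⊤) :
    D ⊔ (K ⊓ M) = K := by
  refine le_antisymm (sup_le hDK inf_le_left) ?_
  intro x hxK
  obtain ⟨d, hd, m, hm, rfl⟩ := aux_mem_sup_of_normal hD (h ▸ Subgroup.mem_top x : x ∈ D ⊔ M)
  have hmK : m ∈ K := by
    have h2 : d⁻¹ * (d * m) ∈ K := mul_mem (inv_mem (hDK hd)) hxK
    simpa [mul_assoc] using h2
  exact mul_mem (Subgroup.mem_sup_left hd)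
    (Subgroup.mem_sup_right (Subgroup.mem_inf.mpr ⟨hmK, hm⟩))

/-- If the Frattini subgroup is trivial, any nontrivial subgroup avoids some maximal subgroup. -/
lemma aux_exists_coatom_not_le (hfr : frattini G = ⊥) {D : Subgroup G} (hD : D ≠ ⊥) :
    ∃ M : Subgroup G, IsCoatom M ∧ ¬ D ≤ M := by
  by_contra h
  push_neg at h
  refine hD (le_bot_iff.mp ?_)
  rw [← hfr]
  exact le_iInf₂ h

/-- Commutators lie in any normal coatom. -/
lemma aux_commutator_mem_coatom {H : Type*} [Group H] {M : Subgroup H} (hM : IsCoatom M)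
    (hMn : M.Normal) (x y : H) : ⁅x, y⁆ ∈ M := by
  haveI := hMn
  -- the quotient H/M has no proper nontrivial subgroups, hence is commutative
  have hcomm : ∀ a b : H ⧸ M, a * b = b * a := by
    have hgen : ∀ q : H ⧸ M, q ≠ 1 → ∀ r : H ⧸ M, r ∈ Subgroup.zpowers q := by
      intro q hq r
      set P := Subgroup.comap (QuotientGroup.mk' M) (Subgroup.zpowers q) with hP
      have hMP : M ≤ P := by
        intro m hm
        have : (QuotientGroup.mk' M) m = 1 := (QuotientGroup.eq_one_iff m).mpr hm
        simp only [hP, Subgroup.mem_comap, this]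
        exact one_mem _
      obtain ⟨x₀, hx₀⟩ := QuotientGroup.mk'_surjective M q
      have hx₀P : x₀ ∈ P := by
        simp only [hP, Subgroup.mem_comap, hx₀]
        exact Subgroup.mem_zpowers q
      have hx₀M : x₀ ∉ M := by
        intro hmem
        exact hq (hx₀ ▸ (QuotientGroup.eq_one_iff x₀).mpr hmem)
      have hlt : M < P := lt_of_le_of_ne hMP (fun h => hx₀M (h ▸ hx₀P))
      have hPtop : P = ⊤ := hM.2 P hlt
      obtain ⟨y₀, hy₀⟩ := QuotientGroup.mk'_surjective M r
      have : y₀ ∈ P := hPtop ▸ Subgroup.mem_top y₀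
      rw [hP, Subgroup.mem_comap] at this
      exact hy₀ ▸ this
    intro a b
    by_cases ha : a = 1
    · simp [ha]
    · obtain ⟨k, hk⟩ := hgen a ha b
      have hk' : a ^ k = b := hk
      rw [← hk']
      exact ((Commute.refl a).zpow_right k).eq
  have h1 : (QuotientGroup.mk' M) ⁅x, y⁆ = 1 := by
    rw [map_commutatorElement]
    exact commutatorElement_eq_one_iff_commute.mpr (hcomm _ _)
  exact (QuotientGroup.eq_one_iff _).mp h1

/-- Nongeneration by the derived subgroup in a finite nilpotent group. -/
lemma aux_nilpotent_nongenerating {H : Type*} [Group H] [Finite H] [Group.IsNilpotent H]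
    {K : Subgroup H} (h : K ⊔ commutator H = ⊤) : K = ⊤ := by
  rcases eq_top_or_exists_le_coatom K with h' | ⟨M, hM, hKM⟩
  · exact h'
  · exfalso
    have hnc : NormalizerCondition H := normalizerCondition_of_isNilpotent
    have hMn : M.Normal := Subgroup.NormalizerCondition.normal_of_coatom M hnc hM
    have hcm : commutator H ≤ M := by
      rw [_root_.commutator_def]
      exact Subgroup.commutator_le.mpr fun x _ y _ => aux_commutator_mem_coatom hM hMn x y
    have htop : (⊤ : Subgroup H) ≤ M := h ▸ sup_le hKM hcm
    exact hM.1 (top_le_iff.mp htop)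

end AuxLemmas

section FiniteAux

variable {G : Type*} [Group G] [Finite G]

instance aux_finite_subgroup : Finite (Subgroup G) :=
  Finite.of_injective (fun H : Subgroup G => (H : Set G)) SetLike.coe_injective

/-- Normal nilpotent subgroups are abelian when the Frattini subgroup is trivial. -/
lemma aux_abelian_of_normal_nilpotent (hfr : frattini G = ⊥)
    {H : Subgroup G} (hHn : H.Normal) (hnil : Group.IsNilpotent H) :
    ∀ x ∈ H, ∀ y ∈ H, x * y = y * x := by
  haveI := hHn
  haveI := hnil
  suffices hC : (⁅H, H⁆ : Subgroup G) = ⊥ by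
    intro x hx y hy
    have hmem : ⁅x, y⁆ ∈ (⊥ : Subgroup G) := hC ▸ Subgroup.commutator_mem_commutator hx hy
    exact (commutatorElement_eq_one_iff_commute.mp (Subgroup.mem_bot.mp hmem)).eq
  by_contra hC
  obtain ⟨M, hM, hCM⟩ := aux_exists_coatom_not_le hfr hC
  have hCH : (⁅H, H⁆ : Subgroup G) ≤ H := Subgroup.commutator_le_left H H
  have hsup : (⁅H, H⁆ : Subgroup G) ⊔ M = ⊤ := hM.2 _ (right_lt_sup.mpr hCM)
  have hded : (⁅H, H⁆ : Subgroup G) ⊔ (H ⊓ M) = H := aux_dedekind inferInstance hCH hsup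
  have key : (H ⊓ M).subgroupOf H ⊔ commutator ↥H = ⊤ := by
    apply Subgroup.map_injective H.subtype_injective
    rw [Subgroup.map_sup, Subgroup.subgroupOf_map_subtype, _root_.commutator_def,
      Subgroup.map_commutator, ← MonoidHom.range_eq_map, H.range_subtype,
      inf_eq_left.mpr inf_le_left, sup_comm]
    exact hded
  have htop : (H ⊓ M).subgroupOf H = ⊤ := aux_nilpotent_nongenerating key
  have hHM : H ≤ M := (Subgroup.subgroupOf_eq_top.mp htop).trans inf_le_right
  exact hCM (hCH.trans hHM)

/-- An abelian normal subgroup is complemented when the Frattini subgroup is trivial. -/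
lemma aux_exists_complement (hfr : frattini G = ⊥) {A : Subgroup G}
    (hA : A.Normal) (hab : ∀ x ∈ A, ∀ y ∈ A, x * y = y * x) :
    ∃ K : Subgroup G, A ⊔ K = ⊤ ∧ A ⊓ K = ⊥ := by
  obtain ⟨K, -, hKmin⟩ :=
    exists_minimal_le_of_wellFoundedLT (P := fun K : Subgroup G => A ⊔ K = ⊤) (a := ⊤) (by simp)
  refine ⟨K, hKmin.prop, ?_⟩
  by_contra hD
  have hDn : (A ⊓ K).Normal := by
    constructor
    intro d hd g
    obtain ⟨a, ha, k, hk, rfl⟩ := aux_mem_sup_of_normal hA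
      (hKmin.prop ▸ Subgroup.mem_top g : g ∈ A ⊔ K)
    obtain ⟨hdA, hdK⟩ := Subgroup.mem_inf.mp hd
    have h1 : k * d * k⁻¹ ∈ A ⊓ K :=
      Subgroup.mem_inf.mpr ⟨hA.conj_mem d hdA k, mul_mem (mul_mem hk hdK) (inv_mem hk)⟩
    have h1A : k * d * k⁻¹ ∈ A := (Subgroup.mem_inf.mp h1).1
    have h2 : a * (k * d * k⁻¹) * a⁻¹ = k * d * k⁻¹ := by
      rw [hab a ha _ h1A]
      exact mul_inv_cancel_right _ _
    have h3 : (a * k) * d * (a * k)⁻¹ = a * (k * d * k⁻¹) * a⁻¹ := by group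
    rw [h3, h2]
    exact h1
  obtain ⟨M, hM, hDM⟩ := aux_exists_coatom_not_le hfr hD
  have hsup : (A ⊓ K) ⊔ M = ⊤ := hM.2 _ (right_lt_sup.mpr hDM)
  have hK' : (A ⊓ K) ⊔ (K ⊓ M) = K := aux_dedekind hDn inf_le_right hsup
  have hnew : A ⊔ (K ⊓ M) = ⊤ := by
    rw [← top_le_iff, ← hKmin.prop]
    conv_lhs => rw [← hK']
    exact sup_le le_sup_left (sup_le (inf_le_left.trans le_sup_left) le_sup_right)
  have hle : K ≤ K ⊓ M := hKmin.2 hnew inf_le_left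
  exact hDM (inf_le_right.trans (hle.trans inf_le_right))

/-- Every nontrivial normal subgroup contains a minimal normal subgroup. -/
lemma aux_exists_minimal_normal_le {A : Subgroup G} (hA : A.Normal) (h : A ≠ ⊥) :
    ∃ N : Subgroup G, IsMinimalNormal N ∧ N ≤ A := by
  obtain ⟨N, -, hmin⟩ := exists_minimal_le_of_wellFoundedLT
    (P := fun K : Subgroup G => K.Normal ∧ K ≠ ⊥ ∧ K ≤ A) (a := A) ⟨hA, h, le_rfl⟩
  refine ⟨N, ⟨hmin.prop.1, hmin.prop.2.1, ?_⟩, hmin.prop.2.2⟩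
  intro K hK hKN
  by_cases hKbot : K = ⊥
  · exact Or.inl hKbot
  · exact Or.inr (le_antisymm hKN (hmin.2 ⟨hK, hKbot, hKN.trans hmin.prop.2.2⟩ hKN))

/-- Decomposition of abelian normal subgroups into minimal normal subgroups. -/
lemma aux_decomp (hfr : frattini G = ⊥) :
    ∀ n : ℕ, ∀ A : Subgroup G, Nat.card A ≤ n → A.Normal →
      (∀ x ∈ A, ∀ y ∈ A, x * y = y * x) →
      ∃ s : Finset (Subgroup G),
        (∀ H ∈ s, (IsMinimalNormal H ∧ ∀ x ∈ H, ∀ y ∈ H, x * y = y * x) ∧ H ≤ A) ∧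
        (∀ H ∈ s, Disjoint H (⨆ K ∈ s.erase H, (K : Subgroup G))) ∧
        (⨆ H ∈ s, H) = A := by
  classical
  intro n
  induction n using Nat.strong_induction_on with
  | _ n ih =>
    intro A hcard hA hab
    by_cases hbot : A = ⊥
    · exact ⟨∅, by simp, by simp, by simp [hbot]⟩
    obtain ⟨N, hNmin, hNA⟩ := aux_exists_minimal_normal_le hA hbot
    have hNn : N.Normal := hNmin.1
    have hNne : N ≠ ⊥ := hNmin.2.1
    have hNab : ∀ x ∈ N, ∀ y ∈ N, x * y = y * x := fun x hx y hy => hab x (hNA hx) y (hNA hy)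
    obtain ⟨K, hKsup, hKinf⟩ := aux_exists_complement hfr hNn hNab
    set A' := A ⊓ K with hA'def
    have hA'A : A' ≤ A := inf_le_left
    have hA'n : A'.Normal := by
      constructor
      intro d hd g
      obtain ⟨m, hm, k, hk, rfl⟩ := aux_mem_sup_of_normal hNn
        (hKsup ▸ Subgroup.mem_top g : g ∈ N ⊔ K)
      obtain ⟨hdA, hdK⟩ := Subgroup.mem_inf.mp hd
      have h1 : k * d * k⁻¹ ∈ A' :=
        Subgroup.mem_inf.mpr ⟨hA.conj_mem d hdA k, mul_mem (mul_mem hk hdK) (inv_mem hk)⟩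
      have h1A : k * d * k⁻¹ ∈ A := (Subgroup.mem_inf.mp h1).1
      have h2 : m * (k * d * k⁻¹) * m⁻¹ = k * d * k⁻¹ := by
        rw [hab m (hNA hm) _ h1A]
        exact mul_inv_cancel_right _ _
      have h3 : (m * k) * d * (m * k)⁻¹ = m * (k * d * k⁻¹) * m⁻¹ := by group
      rw [h3, h2]
      exact h1
    have hded : N ⊔ A' = A := aux_dedekind hNn hNA hKsup
    have hA'N : A' ⊓ N = ⊥ := by
      rw [eq_bot_iff, ← hKinf]
      exact le_inf inf_le_right (inf_le_left.trans inf_le_right)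
    have hA'ne : A' ≠ A := by
      intro h
      apply hNne
      rw [eq_bot_iff, ← hA'N]
      exact le_inf (h ▸ hNA) le_rfl
    have hlt : Nat.card A' < n := by
      rcases lt_or_ge (Nat.card A') (Nat.card A) with h | h
      · exact lt_of_lt_of_le h hcard
      · exact absurd (Subgroup.eq_of_le_of_card_ge hA'A h) hA'ne
    obtain ⟨s', hs'1, hs'2, hs'3⟩ := ih (Nat.card A') hlt A' le_rfl hA'n
      (fun x hx y hy => hab x (hA'A hx) y (hA'A hy))
    have hNs' : N ∉ s' := by
      intro h
      apply hNne
      rw [eq_bot_iff, ← hA'N]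
      exact le_inf (hs'1 N h).2 le_rfl
    refine ⟨insert N s', ?_, ?_, ?_⟩
    · intro H hH
      rcases Finset.mem_insert.mp hH with rfl | hHs
      · exact ⟨⟨hNmin, hNab⟩, hNA⟩
      · exact ⟨(hs'1 H hHs).1, (hs'1 H hHs).2.trans hA'A⟩
    · intro H hH
      rcases Finset.mem_insert.mp hH with rfl | hHs
      · rw [Finset.erase_insert hNs', hs'3]
        rw [disjoint_iff, inf_comm]
        exact hA'N
      · have hne : N ≠ H := fun h => hNs' (h ▸ hHs)
        rw [Finset.erase_insert_of_ne hne, Finset.iSup_insert]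
        have hS'A' : (⨆ K ∈ s'.erase H, (K : Subgroup G)) ≤ A' :=
          iSup₂_le fun K hK => (hs'1 K (Finset.mem_of_mem_erase hK)).2
        have hdisjHS' : Disjoint H (⨆ K ∈ s'.erase H, (K : Subgroup G)) := hs'2 H hHs
        have hHA' : H ≤ A' := (hs'1 H hHs).2
        rw [disjoint_iff, eq_bot_iff]
        intro x hx
        obtain ⟨hxH, hxNS⟩ := Subgroup.mem_inf.mp hx
        obtain ⟨nn, hn, t, ht, rfl⟩ := aux_mem_sup_of_normal hNn hxNS
        have htA' : t ∈ A' := hS'A' ht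
        have hnA' : nn ∈ A' := by
          have hrw : nn = (nn * t) * t⁻¹ := by group
          rw [hrw]
          exact mul_mem (hHA' hxH) (inv_mem htA')
        have hn1 : nn = 1 := by
          have hmem : nn ∈ A' ⊓ N := Subgroup.mem_inf.mpr ⟨hnA', hn⟩
          rw [hA'N] at hmem
          exact Subgroup.mem_bot.mp hmem
        rw [hn1, one_mul] at hxH ⊢
        exact hdisjHS'.le_bot (Subgroup.mem_inf.mpr ⟨hxH, ht⟩)
    · rw [Finset.iSup_insert, hs'3]
      exact hded

end FiniteAux

/-- A join of normal subgroups is normal. -/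
lemma aux_normal_biSup {G : Type*} [Group G] {S : Set (Subgroup G)}
    (h : ∀ H ∈ S, H.Normal) : (⨆ H ∈ S, H).Normal := by
  constructor
  intro x hx g
  have hle : (⨆ H ∈ S, H) ≤
      Subgroup.comap ((MulAut.conj g).toMonoidHom) (⨆ H ∈ S, H) := by
    refine iSup₂_le fun H hH y hy => Subgroup.mem_comap.mpr ?_
    have hmem : g * y * g⁻¹ ∈ (⨆ H ∈ S, H) :=
      le_iSup₂ (f := fun (H : Subgroup G) (_ : H ∈ S) => H) H hH ((h H hH).conj_mem y hy g)
    simpa [MulAut.conj] using hmem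
  have := hle hx
  rw [Subgroup.mem_comap] at this
  simpa [MulAut.conj] using this

theorem fitting_of_frattini_trivial (G : Type*) [Group G] [Finite G]
    (hfr : frattini G = ⊥) :
    (∃ s : Finset (Subgroup G),
      (∀ H ∈ s, IsMinimalNormal H ∧ ∀ x y : H, x * y = y * x) ∧
      iSupIndep (fun H : s => (H : Subgroup G)) ∧
      (⨆ H ∈ s, H) = fittingSubgroup G) ∧
    ∀ x y : fittingSubgroup G, x * y = y * x := by
  classical
  set S₀ : Set (Subgroup G) :=
    {N | IsMinimalNormal N ∧ ∀ x ∈ N, ∀ y ∈ N, x * y = y * x} with hS₀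
  set T : Subgroup G := ⨆ N ∈ S₀, N with hT
  have hpair : ∀ N ∈ S₀, ∀ K ∈ S₀, ∀ x ∈ N, ∀ y ∈ K, x * y = y * x := by
    intro N hN K hK x hx y hy
    by_cases hNK : N = K
    · exact hK.2 x (hNK ▸ hx) y hy
    · have hinf : (N ⊓ K).Normal := by
        haveI := hN.1.1
        haveI := hK.1.1
        infer_instance
      have hdis : Disjoint N K := by
        rw [disjoint_iff]
        rcases hN.1.2.2 (N ⊓ K) hinf inf_le_left with h | h
        · exact h
        · exfalso
          rcases hK.1.2.2 N hN.1.1 (h ▸ inf_le_right) with h' | h'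
          · exact hN.1.2.1 h'
          · exact hNK h'
      exact (Subgroup.commute_of_normal_of_disjoint N K hN.1.1 hK.1.1 hdis x y hx hy).eq
  have hclaim1 : ∀ N ∈ S₀, ∀ nn ∈ N, ∀ y ∈ T, nn * y = y * nn := by
    intro N hN nn hnn y hy
    have hle : T ≤ Subgroup.centralizer {nn} := by
      refine iSup₂_le fun K hK k hk => ?_
      rw [Subgroup.mem_centralizer_iff]
      rintro g rfl
      exact hpair N hN K hK g hnn k hk
    have := Subgroup.mem_centralizer_iff.mp (hle hy)
    exact this nn rfl
  have hTab : ∀ x ∈ T, ∀ y ∈ T, x * y = y * x := by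
    intro x hx y hy
    have hle : T ≤ Subgroup.centralizer {y} := by
      refine iSup₂_le fun N hN nn hnn => ?_
      rw [Subgroup.mem_centralizer_iff]
      rintro g rfl
      exact (hclaim1 N hN nn hnn g hy).symm
    exact (Subgroup.mem_centralizer_iff.mp (hle hx) y rfl).symm
  have hFleT : fittingSubgroup G ≤ T := by
    refine iSup₂_le fun H hH => ?_
    have habH := aux_abelian_of_normal_nilpotent hfr hH.1 hH.2
    obtain ⟨s, hs1, -, hs3⟩ := aux_decomp hfr (Nat.card H) H le_rfl hH.1 habH
    rw [← hs3]
    refine iSup₂_le fun K hK => ?_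
    exact le_iSup₂ (f := fun (N : Subgroup G) (_ : N ∈ S₀) => N) K (hs1 K hK).1
  have hFab : ∀ x ∈ fittingSubgroup G, ∀ y ∈ fittingSubgroup G, x * y = y * x :=
    fun x hx y hy => hTab x (hFleT hx) y (hFleT hy)
  have hFn : (fittingSubgroup G).Normal :=
    aux_normal_biSup (fun H hH => hH.1)
  obtain ⟨s, hs1, hs2, hs3⟩ :=
    aux_decomp hfr (Nat.card (fittingSubgroup G)) (fittingSubgroup G) le_rfl hFn hFab
  refine ⟨⟨s, ?_, ?_, hs3⟩, ?_⟩
  · intro H hH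
    exact ⟨(hs1 H hH).1.1, fun x y => Subtype.ext ((hs1 H hH).1.2 x.1 x.2 y.1 y.2)⟩
  · rintro ⟨H, hH⟩
    refine (hs2 H hH).mono_right ?_
    refine iSup_le fun K => iSup_le fun hne => ?_
    exact le_iSup₂ (f := fun (L : Subgroup G) (_ : L ∈ s.erase H) => L) (K : Subgroup G)
      (Finset.mem_erase.mpr ⟨fun h => hne (Subtype.ext h), K.2⟩)
  · intro x y
    exact Subtype.ext (hFab x.1 x.2 y.1 y.2)
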